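/- Let G be a finitely generated Cayley graph of an infinite group. If G is 1-ended, then G is 3-connected. -/

import Mathlib

open SimpleGraph CategoryTheory

namespace Stmt14

variable {V : Type*} (G : SimpleGraph V)

/-- The (outer) boundary of a set of vertices. -/
def bd (U : Set V) : Set V := {v | v ∉ U ∧ ∃ u ∈ U, G.Adj u v}

variable {G}

lemma bd_not_mem {U : Set V} {v : V} (h : v ∈ bd G U) : v ∉ U := h.1

lemma exists_bd_of_walk {U : Set V} {a b : V} (w : G.Walk a b) (ha : a ∈ U) (hb : b ∉ U) :
    ∃ v ∈ w.support, v ∈ bd G U := by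
  induction w with
  | nil => exact absurd ha hb
  | @cons x y z hadj w ih =>
    by_cases hy : y ∈ U
    · obtain ⟨v, hv, hvbd⟩ := ih hy hb
      exact ⟨v, by simp [hv], hvbd⟩
    · exact ⟨y, by simp, ⟨hy, x, ha, hadj⟩⟩

lemma bd_nonempty (hpc : G.Preconnected) {U : Set V} (hU : U.Nonempty) (hUc : Uᶜ.Nonempty) :
    (bd G U).Nonempty := by
  obtain ⟨a, ha⟩ := hU
  obtain ⟨b, hb⟩ := hUc
  obtain ⟨w⟩ := hpc a b
  obtain ⟨v, _, hv⟩ := exists_bd_of_walk w ha hb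
  exact ⟨v, hv⟩

lemma bd_union_subset {X Y : Set V} :
    bd G (X ∪ Y) ⊆ (bd G X ∪ bd G Y) \ (X ∪ Y) := by
  rintro v ⟨hv, u, hu, hadj⟩
  refine ⟨?_, hv⟩
  rcases hu with hu | hu
  · exact Or.inl ⟨fun h => hv (Or.inl h), u, hu, hadj⟩
  · exact Or.inr ⟨fun h => hv (Or.inr h), u, hu, hadj⟩

lemma bd_finite (hnb : ∀ v : V, (G.neighborSet v).Finite) {U : Set V} (hU : U.Finite) :
    (bd G U).Finite := by
  apply (hU.biUnion (fun u _ => hnb u)).subset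
  rintro v ⟨hv, u, hu, hadj⟩
  exact Set.mem_biUnion hu hadj

lemma bd_partition (hnb : ∀ v : V, (G.neighborSet v).Finite) {X Y : Set V}
    (hX : X.Finite) (hY : Y.Finite) :
    (bd G X).ncard =
      (bd G X ∩ Y).ncard + ((bd G X ∩ bd G Y).ncard + (bd G X \ (Y ∪ bd G Y)).ncard) := by
  have hAX : (bd G X).Finite := bd_finite hnb hX
  have hAY : (bd G Y).Finite := bd_finite hnb hY
  have e1 : bd G X = (bd G X ∩ Y) ∪ ((bd G X ∩ bd G Y) ∪ (bd G X \ (Y ∪ bd G Y))) := by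
    ext v
    constructor
    · intro hv
      by_cases h1 : v ∈ Y
      · exact Or.inl ⟨hv, h1⟩
      · by_cases h2 : v ∈ bd G Y
        · exact Or.inr (Or.inl ⟨hv, h2⟩)
        · exact Or.inr (Or.inr ⟨hv, fun h => h.elim h1 h2⟩)
    · rintro (h | h | h)
      · exact h.1
      · exact h.1
      · exact h.1
  have d2 : Disjoint (bd G X ∩ bd G Y) (bd G X \ (Y ∪ bd G Y)) := by
    rw [Set.disjoint_left]
    intro v h1 h2
    exact h2.2 (Or.inr h1.2)
  have d1 : Disjoint (bd G X ∩ Y) ((bd G X ∩ bd G Y) ∪ (bd G X \ (Y ∪ bd G Y))) := by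
    rw [Set.disjoint_left]
    intro v h1 h2
    rcases h2 with h2 | h2
    · exact h2.2.1 h1.2
    · exact h2.2 (Or.inl h1.2)
  conv_lhs => rw [e1]
  rw [Set.ncard_union_eq d1 (hAX.inter_of_left _)
        (((hAX.inter_of_left _).union (hAX.diff))),
      Set.ncard_union_eq d2 (hAX.inter_of_left _) (hAX.diff)]

lemma submod (hnb : ∀ v : V, (G.neighborSet v).Finite) {X Y : Set V}
    (hX : X.Finite) (hY : Y.Finite) :
    (bd G (X ∩ Y)).ncard + (bd G (X ∪ Y)).ncard ≤ (bd G X).ncard + (bd G Y).ncard := by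
  have hAX : (bd G X).Finite := bd_finite hnb hX
  have hAY : (bd G Y).Finite := bd_finite hnb hY
  have h1 : bd G (X ∩ Y) ⊆ (X ∩ bd G Y) ∪ ((bd G X ∩ Y) ∪ (bd G X ∩ bd G Y)) := by
    rintro v ⟨hv, u, hu, hadj⟩
    have hvX : v ∈ X ∨ v ∈ bd G X := by
      by_cases h : v ∈ X
      · exact Or.inl h
      · exact Or.inr ⟨h, u, hu.1, hadj⟩
    have hvY : v ∈ Y ∨ v ∈ bd G Y := by
      by_cases h : v ∈ Y
      · exact Or.inl h
      · exact Or.inr ⟨h, u, hu.2, hadj⟩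
    rcases hvX with hX' | hX' <;> rcases hvY with hY' | hY'
    · exact absurd ⟨hX', hY'⟩ hv
    · exact Or.inl ⟨hX', hY'⟩
    · exact Or.inr (Or.inl ⟨hX', hY'⟩)
    · exact Or.inr (Or.inr ⟨hX', hY'⟩)
  have h2 : bd G (X ∪ Y) ⊆
      (bd G X \ (Y ∪ bd G Y)) ∪ ((bd G Y \ (X ∪ bd G X)) ∪ (bd G X ∩ bd G Y)) := by
    rintro v ⟨hv, u, hu, hadj⟩
    have hvnX : v ∉ X := fun h => hv (Or.inl h)
    have hvnY : v ∉ Y := fun h => hv (Or.inr h)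
    have hv' : v ∈ bd G X ∨ v ∈ bd G Y := by
      rcases hu with hu | hu
      · exact Or.inl ⟨hvnX, u, hu, hadj⟩
      · exact Or.inr ⟨hvnY, u, hu, hadj⟩
    by_cases hx : v ∈ bd G X <;> by_cases hy : v ∈ bd G Y
    · exact Or.inr (Or.inr ⟨hx, hy⟩)
    · exact Or.inl ⟨hx, fun h => h.elim hvnY hy⟩
    · exact Or.inr (Or.inl ⟨hy, fun h => h.elim hvnX hx⟩)
    · exact (hv'.elim hx hy).elim
  have c1 : (bd G (X ∩ Y)).ncard ≤
      (X ∩ bd G Y).ncard + ((bd G X ∩ Y).ncard + (bd G X ∩ bd G Y).ncard) := by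
    refine le_trans (Set.ncard_le_ncard h1 ?_) ?_
    · exact (hAY.inter_of_right _).union ((hAX.inter_of_left _).union (hAX.inter_of_left _))
    · exact le_trans (Set.ncard_union_le _ _)
        (by gcongr; exact Set.ncard_union_le _ _)
  have c2 : (bd G (X ∪ Y)).ncard ≤
      (bd G X \ (Y ∪ bd G Y)).ncard + ((bd G Y \ (X ∪ bd G X)).ncard + (bd G X ∩ bd G Y).ncard) := by
    refine le_trans (Set.ncard_le_ncard h2 ?_) ?_
    · exact (hAX.diff).union ((hAY.diff).union (hAX.inter_of_left _))
    · exact le_trans (Set.ncard_union_le _ _)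
        (by gcongr; exact Set.ncard_union_le _ _)
  have e1 := bd_partition hnb hX hY
  have e2 := bd_partition hnb hY hX
  have r1 : (X ∩ bd G Y).ncard = (bd G Y ∩ X).ncard := by rw [Set.inter_comm]
  have r2 : (bd G X ∩ bd G Y).ncard = (bd G Y ∩ bd G X).ncard := by rw [Set.inter_comm]
  omega

/-! ### Reachability avoiding a set -/

variable (G) in
/-- Reachability through walks avoiding `K`. -/
def RA (K : Set V) (x y : V) : Prop :=
  ∃ w : G.Walk x y, ∀ v ∈ w.support, v ∉ K

lemma RA.refl {K : Set V} {x : V} (hx : x ∉ K) : RA G K x x :=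
  ⟨Walk.nil, by simpa using hx⟩

lemma RA.symm {K : Set V} {x y : V} : RA G K x y → RA G K y x := by
  rintro ⟨w, hw⟩
  exact ⟨w.reverse, fun v hv => hw v (by simpa using hv)⟩

lemma RA.trans {K : Set V} {x y z : V} : RA G K x y → RA G K y z → RA G K x z := by
  rintro ⟨w, hw⟩ ⟨w', hw'⟩
  refine ⟨w.append w', fun v hv => ?_⟩
  rcases (w.mem_support_append_iff w').mp hv with h | h
  · exact hw v h
  · exact hw' v h

lemma RA.start_not_mem {K : Set V} {x y : V} (h : RA G K x y) : x ∉ K := by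
  obtain ⟨w, hw⟩ := h
  exact hw x w.start_mem_support

lemma RA.end_not_mem {K : Set V} {x y : V} (h : RA G K x y) : y ∉ K := by
  obtain ⟨w, hw⟩ := h
  exact hw y w.end_mem_support

lemma RA.adj_extend {K : Set V} {x y z : V} (h : RA G K x y) (hadj : G.Adj y z)
    (hz : z ∉ K) : RA G K x z := by
  refine h.trans ⟨hadj.toWalk, ?_⟩
  intro v hv
  have : v = y ∨ v = z := by simpa using hv
  rcases this with rfl | rfl
  · exact h.end_not_mem
  · exact hz

/-- Walks cannot escape `U` if the boundary of `U` is contained in `K`. -/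
lemma RA.stay {K U : Set V} {x y : V} (hbd : bd G U ⊆ K) (hx : x ∈ U)
    (h : RA G K x y) : y ∈ U := by
  obtain ⟨w, hw⟩ := h
  by_contra hy
  obtain ⟨v, hv, hvbd⟩ := exists_bd_of_walk w hx hy
  exact hw v hv (hbd hvbd)

lemma RA.of_induce_reachable {K : Set V} {x y : ↥(Kᶜ)}
    (h : (G.induce Kᶜ).Reachable x y) : RA G K x.1 y.1 := by
  obtain ⟨w⟩ := h
  induction w with
  | nil =>
    next u =>
    exact RA.refl u.2
  | @cons a b c hadj w ih =>
    have hab : G.Adj a.1 b.1 := hadj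
    refine RA.trans ⟨hab.toWalk, ?_⟩ ih
    intro v hv
    have : v = a.1 ∨ v = b.1 := by simpa using hv
    rcases this with rfl | rfl
    · exact a.2
    · exact b.2

lemma walk_to_induce {K : Set V} :
    ∀ {x y : V} (w : G.Walk x y) (hx : x ∉ K) (hy : y ∉ K),
      (∀ v ∈ w.support, v ∉ K) →
      (G.induce Kᶜ).Reachable ⟨x, hx⟩ ⟨y, hy⟩
  | x, _, Walk.nil, hx, hy, _ => Reachable.refl _
  | x, y, Walk.cons (v := b) hadj w, hx, hy, hw => by
    have hb : b ∉ K := hw b (by simp)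
    have h' : ∀ v ∈ w.support, v ∉ K := fun v hv => hw v (by simp [hv])
    refine Reachable.trans ?_ (walk_to_induce w hb hy h')
    exact Adj.reachable (by exact hadj)

lemma RA.to_induce_reachable {K : Set V} {x y : V} (h : RA G K x y)
    (hx : x ∉ K) (hy : y ∉ K) :
    (G.induce Kᶜ).Reachable ⟨x, hx⟩ ⟨y, hy⟩ := by
  obtain ⟨w, hw⟩ := h
  exact walk_to_induce w hx hy hw

/-! ### Ends -/

lemma exists_end_eval [G.LocallyFinite] [Fact G.Preconnected] [Infinite V]
    (K : Finset V) (C : G.ComponentCompl ↑K) (hC : C.supp.Infinite) :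
    ∃ e ∈ G.end, e (Opposite.op K) = C := by
  classical
  set F := G.componentComplFunctor with hF
  haveI : ∀ j : (Finset V)ᵒᵖ, Finite (F.obj j) := fun j => G.componentCompl_finite j.unop
  haveI : ∀ j : (Finset V)ᵒᵖ, Nonempty (F.obj j) := fun j =>
    G.componentCompl_nonempty_of_infinite j.unop
  have hML : F.IsMittagLeffler :=
    F.isMittagLeffler_of_exists_finite_range (fun j => ⟨j, 𝟙 j, Set.toFinite _⟩)
  haveI : ∀ j, Nonempty (F.toEventualRanges.obj j) := F.toEventualRanges_nonempty hML
  obtain ⟨s', hs'⟩ := F.toEventualRanges.eval_section_surjective_of_surjective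
    (F.surjective_toEventualRanges hML) (Opposite.op K)
    ⟨C, (G.infinite_iff_in_eventualRange C).mp hC⟩
  refine ⟨(F.toEventualRangesSectionsEquiv s').1, (F.toEventualRangesSectionsEquiv s').2, ?_⟩
  have := congrArg Subtype.val hs'
  exact this

lemma no_two_sides [G.LocallyFinite] [Fact G.Preconnected] [Infinite V]
    (hsub : Subsingleton ↥G.end) {K : Set V} (hK : K.Finite) {A₁ A₂ : Set V}
    (h₁ : A₁.Infinite) (h₂ : A₂.Infinite)
    (hdisj : ∀ z, z ∈ A₁ → z ∈ A₂ → False)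
    (hK₁ : ∀ z ∈ A₁, z ∉ K) (hK₂ : ∀ z ∈ A₂, z ∉ K)
    (hcl₁ : ∀ z ∈ A₁, ∀ y, RA G K z y → y ∈ A₁)
    (hcl₂ : ∀ z ∈ A₂, ∀ y, RA G K z y → y ∈ A₂) : False := by
  classical
  set Kf := hK.toFinset with hKfdef
  have hKf : (↑Kf : Set V) = K := hK.coe_toFinset
  haveI : Infinite ↥A₁ := h₁.to_subtype
  haveI : Infinite ↥A₂ := h₂.to_subtype
  haveI : Finite (G.ComponentCompl ↑Kf) := G.componentCompl_finite Kf
  let f₁ : ↥A₁ → G.ComponentCompl ↑Kf := fun z =>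
    G.componentComplMk (K := ↑Kf) (v := z.1) (by rw [hKf]; exact hK₁ z.1 z.2)
  let f₂ : ↥A₂ → G.ComponentCompl ↑Kf := fun z =>
    G.componentComplMk (K := ↑Kf) (v := z.1) (by rw [hKf]; exact hK₂ z.1 z.2)
  obtain ⟨C₁, hC₁⟩ := Finite.exists_infinite_fiber f₁
  obtain ⟨C₂, hC₂⟩ := Finite.exists_infinite_fiber f₂
  -- supports are infinite
  have hs₁ : (C₁.supp).Infinite := by
    have himg : (Subtype.val '' (f₁ ⁻¹' {C₁}) : Set V).Infinite := by
      rw [Set.infinite_image_iff Subtype.val_injective.injOn]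
      exact Set.infinite_coe_iff.mp hC₁
    refine himg.mono ?_
    rintro v ⟨u, hu, rfl⟩
    exact SimpleGraph.ComponentCompl.mem_supp_iff.mpr ⟨_, hu⟩
  have hs₂ : (C₂.supp).Infinite := by
    have himg : (Subtype.val '' (f₂ ⁻¹' {C₂}) : Set V).Infinite := by
      rw [Set.infinite_image_iff Subtype.val_injective.injOn]
      exact Set.infinite_coe_iff.mp hC₂
    refine himg.mono ?_
    rintro v ⟨u, hu, rfl⟩
    exact SimpleGraph.ComponentCompl.mem_supp_iff.mpr ⟨_, hu⟩
  -- the two components are distinct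
  have hne : C₁ ≠ C₂ := by
    intro he
    have n₁ : Nonempty ↥(f₁ ⁻¹' {C₁}) := by haveI := hC₁; infer_instance
    have n₂ : Nonempty ↥(f₂ ⁻¹' {C₂}) := by haveI := hC₂; infer_instance
    obtain ⟨⟨z₁, hz₁⟩⟩ := n₁
    obtain ⟨⟨z₂, hz₂⟩⟩ := n₂
    have hmk : f₁ z₁ = f₂ z₂ := by
      rw [Set.mem_preimage, Set.mem_singleton_iff] at hz₁ hz₂
      rw [hz₁, hz₂, he]
    have hr := (SimpleGraph.ConnectedComponent.eq).mp hmk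
    have hra : RA G (↑Kf) z₁.1 z₂.1 := RA.of_induce_reachable hr
    rw [hKf] at hra
    exact hdisj z₂.1 (hcl₁ z₁.1 z₁.2 _ hra) z₂.2
  obtain ⟨e₁, he₁, hv₁⟩ := exists_end_eval Kf C₁ hs₁
  obtain ⟨e₂, he₂, hv₂⟩ := exists_end_eval Kf C₂ hs₂
  have hee : (⟨e₁, he₁⟩ : ↥G.end) = ⟨e₂, he₂⟩ := Subsingleton.elim _ _
  have hee' : e₁ = e₂ := congrArg Subtype.val hee
  exact hne (by rw [← hv₁, ← hv₂, hee'])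

/-! ### Cayley graphs -/

section Cayley

variable {Γ : Type*} [Group Γ] (S : Finset Γ)

/-- The Cayley graph. -/
def CayG : SimpleGraph Γ := SimpleGraph.fromRel (fun g h : Γ => ∃ s ∈ S, h = g * s)

lemma cay_adj {x y : Γ} :
    (CayG S).Adj x y ↔ x ≠ y ∧ ((∃ s ∈ S, y = x * s) ∨ (∃ s ∈ S, x = y * s)) :=
  SimpleGraph.fromRel_adj _ x y

variable {S}

lemma cay_adj_mul {g x y : Γ} : (CayG S).Adj (g * x) (g * y) ↔ (CayG S).Adj x y := by
  simp only [cay_adj, ne_eq, mul_assoc, mul_right_inj]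

/-- Left multiplication as a graph isomorphism. -/
def cayIso (g : Γ) : CayG S ≃g CayG S :=
  { toEquiv := Equiv.mulLeft g
    map_rel_iff' := by intro x y; exact cay_adj_mul }

@[simp] lemma cayIso_apply (g x : Γ) : (cayIso (S := S) g) x = g * x := rfl

lemma cay_nbr_finite (v : Γ) : ((CayG S).neighborSet v).Finite := by
  apply (((S : Set Γ).toFinite.image (fun s => v * s)).union
    ((S : Set Γ).toFinite.image (fun s => v * s⁻¹))).subset
  intro y hy
  rw [SimpleGraph.mem_neighborSet, cay_adj] at hy
  obtain ⟨hne, h | h⟩ := hy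
  · obtain ⟨s, hs, rfl⟩ := h
    exact Or.inl ⟨s, hs, rfl⟩
  · obtain ⟨s, hs, hv⟩ := h
    refine Or.inr ⟨s, hs, ?_⟩
    simp [hv, mul_assoc]

lemma cay_reachable_one (hgen : Subgroup.closure (S : Set Γ) = ⊤) (g : Γ) :
    (CayG S).Reachable 1 g := by
  have hg : g ∈ Subgroup.closure (S : Set Γ) := hgen ▸ Subgroup.mem_top g
  induction hg using Subgroup.closure_induction with
  | mem x hx =>
    by_cases hx1 : x = 1
    · rw [hx1]
    · refine SimpleGraph.Adj.reachable ?_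
      rw [cay_adj]
      exact ⟨fun h => hx1 h.symm, Or.inl ⟨x, hx, (one_mul x).symm⟩⟩
  | one => rfl
  | mul x y hx hy rx ry =>
    refine rx.trans ?_
    have := ry.map (cayIso (S := S) x).toHom
    simpa using this
  | inv x hx rx =>
    have := rx.map (cayIso (S := S) x⁻¹).toHom
    exact (by simpa using this : (CayG S).Reachable x⁻¹ 1).symm

lemma cay_connected (hgen : Subgroup.closure (S : Set Γ) = ⊤) : (CayG S).Connected := by
  rw [SimpleGraph.connected_iff]
  refine ⟨fun u v => ?_, ⟨1⟩⟩
  have := (cay_reachable_one hgen (u⁻¹ * v)).map (cayIso (S := S) u).toHom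
  simpa using this

/-! translations of vertex sets -/

/-- Left translation of a set of vertices. -/
def tr (g : Γ) (U : Set Γ) : Set Γ := (fun x => g * x) '' U

lemma tr_tr (g h : Γ) (U : Set Γ) : tr g (tr h U) = tr (g * h) U := by
  simp only [tr, ← Set.image_comp]
  ext x
  simp [mul_assoc]

lemma tr_one (U : Set Γ) : tr 1 U = U := by simp [tr]

lemma mem_tr {g x : Γ} {U : Set Γ} : g * x ∈ tr g U ↔ x ∈ U := by
  constructor
  · rintro ⟨u, hu, he⟩
    have := mul_left_cancel he
    rwa [← this]
  · exact fun h => ⟨x, h, rfl⟩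

lemma tr_finite {g : Γ} {U : Set Γ} (h : U.Finite) : (tr g U).Finite := h.image _

lemma tr_nonempty {g : Γ} {U : Set Γ} (h : U.Nonempty) : (tr g U).Nonempty := h.image _

lemma tr_ncard {g : Γ} {U : Set Γ} : (tr g U).ncard = U.ncard :=
  Set.ncard_image_of_injective _ (mul_right_injective g)

lemma tr_bd_subset (g : Γ) (U : Set Γ) :
    tr g (bd (CayG S) U) ⊆ bd (CayG S) (tr g U) := by
  rintro _ ⟨v, ⟨hv, u, hu, hadj⟩, rfl⟩
  refine ⟨?_, g * u, ⟨u, hu, rfl⟩, cay_adj_mul.mpr hadj⟩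
  intro hmem
  exact hv (mem_tr.mp hmem)

lemma bd_tr (g : Γ) (U : Set Γ) :
    bd (CayG S) (tr g U) = tr g (bd (CayG S) U) := by
  refine Set.Subset.antisymm ?_ (tr_bd_subset g U)
  have := tr_bd_subset (S := S) g⁻¹ (tr g U)
  rw [tr_tr, inv_mul_cancel, tr_one] at this
  intro v hv
  have h2 : g⁻¹ * v ∈ bd (CayG S) U := this ⟨v, hv, rfl⟩
  exact ⟨g⁻¹ * v, h2, by simp⟩

end Cayley

/-! ### The main combinatorial argument -/

theorem no_small_separator {Γ : Type*} [Group Γ] [Infinite Γ] {S : Finset Γ}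
    (hgen : Subgroup.closure (S : Set Γ) = ⊤)
    (hend2 : Subsingleton ↥(CayG S).end) :
    ∀ U : Set Γ, U.Finite → U.Nonempty → ¬((bd (CayG S) U).ncard ≤ 2) := by
  intro U₀ hU₀fin hU₀ne hbd₀
  classical
  have hconn := cay_connected hgen
  have hpc : (CayG S).Preconnected := hconn.preconnected
  haveI : Fact (CayG S).Preconnected := ⟨hpc⟩
  haveI : (CayG S).LocallyFinite := fun v => (cay_nbr_finite v).fintype
  have hnb : ∀ v : Γ, ((CayG S).neighborSet v).Finite := cay_nbr_finite
  -- the connectivity constant κ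
  set κ : ℕ := sInf {n | ∃ U : Set Γ, U.Finite ∧ U.Nonempty ∧ (bd (CayG S) U).ncard = n}
    with hκdef
  have hκmem : κ ∈ {n | ∃ U : Set Γ, U.Finite ∧ U.Nonempty ∧ (bd (CayG S) U).ncard = n} :=
    Nat.sInf_mem ⟨_, U₀, hU₀fin, hU₀ne, rfl⟩
  have hκle : ∀ U : Set Γ, U.Finite → U.Nonempty → κ ≤ (bd (CayG S) U).ncard :=
    fun U h1 h2 => Nat.sInf_le ⟨U, h1, h2, rfl⟩
  have hκ2 : κ ≤ 2 := le_trans (hκle U₀ hU₀fin hU₀ne) hbd₀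
  have hκ1 : 1 ≤ κ := by
    rcases Nat.eq_zero_or_pos κ with h0 | h
    · exfalso
      obtain ⟨U, hUfin, hUne, hU0⟩ := hκmem
      rw [h0] at hU0
      have hbdem : bd (CayG S) U = ∅ := by
        have := bd_finite hnb hUfin
        rwa [Set.ncard_eq_zero this] at hU0
      obtain ⟨v, hv⟩ := bd_nonempty hpc hUne hUfin.infinite_compl.nonempty
      rw [hbdem] at hv
      exact hv
    · exact h
  -- the atom
  obtain ⟨C₀, hC₀fin, hC₀ne, hC₀bd, hC₀card⟩ :
      ∃ C : Set Γ, C.Finite ∧ C.Nonempty ∧ (bd (CayG S) C).ncard = κ ∧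
        C.ncard = sInf {n | ∃ U : Set Γ, U.Finite ∧ U.Nonempty ∧
          (bd (CayG S) U).ncard = κ ∧ U.ncard = n} := by
    obtain ⟨U, h1, h2, h3⟩ := hκmem
    obtain ⟨C, hc1, hc2, hc3, hc4⟩ := Nat.sInf_mem (⟨_, U, h1, h2, h3, rfl⟩ :
      Set.Nonempty {n | ∃ U : Set Γ, U.Finite ∧ U.Nonempty ∧
        (bd (CayG S) U).ncard = κ ∧ U.ncard = n})
    exact ⟨C, hc1, hc2, hc3, hc4.symm ▸ rfl⟩
  have hamin : ∀ U : Set Γ, U.Finite → U.Nonempty → (bd (CayG S) U).ncard = κ →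
      C₀.ncard ≤ U.ncard := by
    intro U h1 h2 h3
    rw [hC₀card]
    exact Nat.sInf_le ⟨U, h1, h2, h3, rfl⟩
  obtain ⟨c₀, hc₀⟩ := id hC₀ne
  -- blocks
  set Bl : Γ → Set Γ := fun x => tr (x * c₀⁻¹) C₀ with hBldef
  have hBl_mem : ∀ x : Γ, x ∈ Bl x := fun x => ⟨c₀, hc₀, by simp⟩
  have hBl_fin : ∀ x : Γ, (Bl x).Finite := fun x => tr_finite hC₀fin
  have hBl_ne : ∀ x : Γ, (Bl x).Nonempty := fun x => tr_nonempty hC₀ne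
  have hBl_bd : ∀ x : Γ, (bd (CayG S) (Bl x)).ncard = κ := by
    intro x
    rw [hBldef]
    rw [bd_tr, tr_ncard, hC₀bd]
  -- translates of the atom are equal or disjoint
  have htr_eq : ∀ g h : Γ, (tr g C₀ ∩ tr h C₀).Nonempty → tr g C₀ = tr h C₀ := by
    intro g h hmeet
    have hfin : ∀ g' : Γ, (tr g' C₀).Finite := fun _ => tr_finite hC₀fin
    have h1 : κ ≤ (bd (CayG S) (tr g C₀ ∩ tr h C₀)).ncard :=
      hκle _ ((hfin g).inter_of_left _) hmeet
    have h2 : κ ≤ (bd (CayG S) (tr g C₀ ∪ tr h C₀)).ncard :=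
      hκle _ ((hfin g).union (hfin h)) ((tr_nonempty hC₀ne).mono Set.subset_union_left)
    have h3 := submod (G := CayG S) hnb (hfin g) (hfin h)
    rw [bd_tr, bd_tr, tr_ncard, tr_ncard, hC₀bd] at h3
    have h4 : (bd (CayG S) (tr g C₀ ∩ tr h C₀)).ncard = κ := by omega
    have h5 : C₀.ncard ≤ (tr g C₀ ∩ tr h C₀).ncard :=
      hamin _ ((hfin g).inter_of_left _) hmeet h4
    have h6 : tr g C₀ ∩ tr h C₀ = tr g C₀ :=
      Set.eq_of_subset_of_ncard_le Set.inter_subset_left (by rw [tr_ncard]; exact h5) (hfin g)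
    have h7 : tr g C₀ ∩ tr h C₀ = tr h C₀ :=
      Set.eq_of_subset_of_ncard_le Set.inter_subset_right (by rw [tr_ncard]; exact h5) (hfin h)
    rw [← h6, h7]
  have hBl_eq : ∀ x y : Γ, (Bl x ∩ Bl y).Nonempty → Bl x = Bl y := by
    intro x y h
    exact htr_eq _ _ h
  have hBl_eq_of_mem : ∀ {x y : Γ}, y ∈ Bl x → Bl y = Bl x := by
    intro x y hy
    exact hBl_eq y x ⟨y, hBl_mem y, hy⟩
  -- block-closed sets
  have hCl_inter : ∀ (U : Set Γ), (∀ x ∈ U, Bl x ⊆ U) → ∀ z : Γ, (Bl z ∩ U).Nonempty →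
      Bl z ⊆ U := by
    rintro U hU z ⟨w, hwB, hwU⟩
    rw [← hBl_eq_of_mem hwB]
    exact hU w hwU
  -- a block neighboring a block-closed set has boundary meeting the set
  have hfrontier : ∀ (U : Set Γ), (∀ x ∈ U, Bl x ⊆ U) → ∀ z : Γ, z ∈ bd (CayG S) U →
      ∃ u, u ∈ bd (CayG S) (Bl z) ∩ U := by
    rintro U hU z ⟨hzU, u, huU, hadj⟩
    refine ⟨u, ⟨?_, z, hBl_mem z, hadj.symm⟩, huU⟩
    intro huB
    exact hzU (hCl_inter U hU z ⟨u, huB, huU⟩ (hBl_mem z))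
  -- disjointness of a block from a block-closed set not containing its basepoint
  have hBl_disj : ∀ (U : Set Γ), (∀ x ∈ U, Bl x ⊆ U) → ∀ z : Γ, z ∉ U → Bl z ∩ U = ∅ := by
    intro U hU z hz
    by_contra hne
    exact hz (hCl_inter U hU z (Set.nonempty_iff_ne_empty.mpr hne) (hBl_mem z))
  interval_cases κ
  -- κ = 1
  · obtain ⟨b, hb⟩ := Set.ncard_eq_one.mp (hBl_bd 1)
    have hbB : b ∈ bd (CayG S) (Bl 1) := hb ▸ rfl
    obtain ⟨u, hu⟩ := hfrontier (Bl 1) (fun x hx => (hBl_eq_of_mem hx).le) b hbB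
    obtain ⟨u', hu'⟩ := Set.ncard_eq_one.mp (hBl_bd b)
    rw [hu'] at hu
    have hbdU : bd (CayG S) (Bl 1 ∪ Bl b) = ∅ := by
      refine Set.eq_empty_of_subset_empty ?_
      refine subset_trans bd_union_subset ?_
      intro v hv
      obtain ⟨hv1, hv2⟩ := hv
      rcases hv1 with hv1 | hv1
      · rw [hb] at hv1
        exact (hv2 (Or.inr (hv1 ▸ hBl_mem b))).elim
      · rw [hu'] at hv1
        have hveq : v = u' := hv1
        have h1 : u = u' := hu.1
        exact (hv2 (Or.inl (hveq ▸ h1 ▸ hu.2))).elim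
    have := hκle (Bl 1 ∪ Bl b) ((hBl_fin 1).union (hBl_fin b))
      ((hBl_ne 1).mono Set.subset_union_left)
    rw [hbdU] at this
    simp at this
  -- κ = 2
  · obtain ⟨p, q, hpq, hbdP⟩ := Set.ncard_eq_two.mp (hBl_bd 1)
    -- one-sided chains marching away from the base block
    have chain : ∀ a b : Γ, a ≠ b → bd (CayG S) (Bl 1) = {a, b} →
        ∃ s : ℕ → Set Γ × Γ,
          s 0 = (Bl 1, a) ∧
          (∀ n, (s (n+1)).1 = (s n).1 ∪ Bl (s n).2) ∧
          (∀ n, ((s n).1.Finite ∧ Bl 1 ⊆ (s n).1) ∧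
                (∀ x ∈ (s n).1, Bl x ⊆ (s n).1) ∧
                b ∉ (s n).1 ∧
                bd (CayG S) (s n).1 = {b, (s n).2} ∧
                (s n).2 ≠ b ∧
                (∀ z ∈ (s n).1, Bl z = Bl 1 ∨ b ∉ bd (CayG S) (Bl z))) := by
      intro a b hab hbdP'
      set Inv : Set Γ × Γ → Prop := fun Hf =>
        (Hf.1.Finite ∧ Bl 1 ⊆ Hf.1) ∧
        (∀ x ∈ Hf.1, Bl x ⊆ Hf.1) ∧
        b ∉ Hf.1 ∧
        bd (CayG S) Hf.1 = {b, Hf.2} ∧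
        Hf.2 ≠ b ∧
        (∀ z ∈ Hf.1, Bl z = Bl 1 ∨ b ∉ bd (CayG S) (Bl z)) with hInvdef
      have hb1 : b ∉ Bl 1 := by
        have hbbd : b ∈ bd (CayG S) (Bl 1) := by rw [hbdP']; right; rfl
        exact hbbd.1
      have base : Inv (Bl 1, a) := by
        refine ⟨⟨hBl_fin 1, subset_refl _⟩, fun x hx => (hBl_eq_of_mem hx).le, hb1, ?_,
          hab, fun z hz => Or.inl (hBl_eq_of_mem hz)⟩
        rw [hbdP', Set.pair_comm]
      have step : ∀ Hf : Set Γ × Γ, Inv Hf → ∃ f', Inv (Hf.1 ∪ Bl Hf.2, f') := by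
        rintro ⟨H, f⟩ hInvF
        obtain ⟨⟨Hfin, hP₀H⟩, hclosed, hbH, hbdH, hfb, hα⟩ := hInvF
        simp only at hbdH hclosed hα ⊢
        have hfbd : f ∈ bd (CayG S) H := by rw [hbdH]; right; rfl
        obtain ⟨hfH, u, huH, hadjuf⟩ := hfbd
        have hHne : H.Nonempty := ⟨1, hP₀H (hBl_mem 1)⟩
        have hH'fin : (H ∪ Bl f).Finite := Hfin.union (hBl_fin f)
        have hH'ne : (H ∪ Bl f).Nonempty := hHne.mono Set.subset_union_left
        have hdisjBf : Bl f ∩ H = ∅ := hBl_disj H hclosed f hfH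
        have huBf : u ∉ Bl f := by
          intro h
          have : u ∈ Bl f ∩ H := ⟨h, huH⟩
          rw [hdisjBf] at this
          exact this
        have hubd : u ∈ bd (CayG S) (Bl f) := ⟨huBf, f, hBl_mem f, hadjuf.symm⟩
        obtain ⟨x₁, x₂, hx12, hxset, hx₁H⟩ :
            ∃ x₁ x₂ : Γ, x₁ ≠ x₂ ∧ bd (CayG S) (Bl f) = {x₁, x₂} ∧ x₁ ∈ H := by
          obtain ⟨y₁, y₂, hy12, hyset⟩ := Set.ncard_eq_two.mp (hBl_bd f)
          have hu' : u = y₁ ∨ u = y₂ := by rw [hyset] at hubd; exact hubd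
          rcases hu' with rfl | rfl
          · exact ⟨u, y₂, hy12, hyset, huH⟩
          · exact ⟨u, y₁, Ne.symm hy12, by rw [hyset, Set.pair_comm], huH⟩
        have hbdsub : ∀ v, v ∈ bd (CayG S) (H ∪ Bl f) → v = b ∨ v = x₂ := by
          intro v hv
          obtain ⟨hv1, hv2⟩ := bd_union_subset hv
          rcases hv1 with hv1 | hv1
          · rw [hbdH] at hv1
            rcases hv1 with rfl | rfl
            · exact Or.inl rfl
            · exact (hv2 (Or.inr (hBl_mem _))).elim
          · rw [hxset] at hv1
            rcases hv1 with rfl | rfl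
            · exact (hv2 (Or.inl hx₁H)).elim
            · exact Or.inr rfl
        have hbBf : b ∉ Bl f := by
          intro hbBf
          have hsub : bd (CayG S) (H ∪ Bl f) ⊆ {x₂} := by
            intro v hv
            rcases hbdsub v hv with rfl | rfl
            · exact (hv.1 (Or.inr hbBf)).elim
            · rfl
          have hle := Set.ncard_le_ncard hsub (Set.finite_singleton _)
          have hge := hκle (H ∪ Bl f) hH'fin hH'ne
          rw [Set.ncard_singleton] at hle
          omega
        have hbH' : b ∉ H ∪ Bl f := by rintro (h | h); exacts [hbH h, hbBf h]
        have hbbd' : b ∈ bd (CayG S) (H ∪ Bl f) := by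
          have hthis : b ∈ bd (CayG S) H := by rw [hbdH]; left; rfl
          obtain ⟨_, w, hwH, hadj⟩ := hthis
          exact ⟨hbH', w, Or.inl hwH, hadj⟩
        by_cases hx₂good : x₂ ∉ H ∪ Bl f ∧ x₂ ≠ b
        · obtain ⟨hx₂H', hx₂b⟩ := hx₂good
          refine ⟨x₂, ⟨hH'fin, hP₀H.trans Set.subset_union_left⟩, ?_, hbH', ?_, hx₂b, ?_⟩
          · intro x hx
            rcases hx with hx | hx
            · exact (hclosed x hx).trans Set.subset_union_left
            · rw [hBl_eq_of_mem hx]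
              exact Set.subset_union_right
          · refine Set.Subset.antisymm ?_ ?_
            · intro v hv
              rcases hbdsub v hv with rfl | rfl
              · exact Or.inl rfl
              · exact Or.inr rfl
            · rintro v hv
              rcases hv with rfl | hveq
              · exact hbbd'
              · have hbdmem : v ∈ bd (CayG S) (Bl f) := by rw [hxset]; exact Or.inr hveq
                obtain ⟨_, w, hwBf, hadj⟩ := hbdmem
                refine ⟨?_, w, Or.inr hwBf, hadj⟩
                rw [show v = x₂ from hveq]
                exact hx₂H'
          · intro z hz
            rcases hz with hz | hz
            · exact hα z hz
            · refine Or.inr ?_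
              rw [hBl_eq_of_mem hz, hxset]
              rintro (rfl | rfl)
              · exact hbH hx₁H
              · exact hx₂b rfl
        · exfalso
          have hsub : bd (CayG S) (H ∪ Bl f) ⊆ {b} := by
            intro v hv
            rcases hbdsub v hv with rfl | rfl
            · rfl
            · by_cases h2 : v ∈ H ∪ Bl f
              · exact (hv.1 h2).elim
              · have : v = b := by
                  by_contra hne
                  exact hx₂good ⟨h2, hne⟩
                exact this
          have hle := Set.ncard_le_ncard hsub (Set.finite_singleton _)
          have hge := hκle (H ∪ Bl f) hH'fin hH'ne
          rw [Set.ncard_singleton] at hle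
          omega
      have hex : ∀ Hf : Set Γ × Γ, ∃ Hf' : Set Γ × Γ,
          Inv Hf → (Inv Hf' ∧ Hf'.1 = Hf.1 ∪ Bl Hf.2) := by
        intro Hf
        by_cases h : Inv Hf
        · obtain ⟨f', hf'⟩ := step Hf h
          exact ⟨(Hf.1 ∪ Bl Hf.2, f'), fun _ => ⟨hf', rfl⟩⟩
        · exact ⟨Hf, fun h' => absurd h' h⟩
      choose nxt hnxt using hex
      refine ⟨fun n => nxt^[n] (Bl 1, a), rfl, ?_, ?_⟩
      all_goals
        have hsInv : ∀ n, Inv (nxt^[n] (Bl 1, a)) := by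
          intro n
          induction n with
          | zero => exact base
          | succ n ih =>
            rw [Function.iterate_succ_apply']
            exact (hnxt _ ih).1
      · intro n
        show (nxt^[n+1] (Bl 1, a)).1 = (nxt^[n] (Bl 1, a)).1 ∪ Bl (nxt^[n] (Bl 1, a)).2
        rw [Function.iterate_succ_apply']
        exact (hnxt _ (hsInv n)).2
      · intro n
        exact hsInv n
    -- build the two chains
    obtain ⟨s1, hs10, hs1step, hs1inv⟩ := chain p q hpq hbdP
    obtain ⟨s2, hs20, hs2step, hs2inv⟩ := chain q p hpq.symm (by rw [hbdP, Set.pair_comm])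
    have h1P : ∀ n, Bl 1 ⊆ (s1 n).1 := fun n => (hs1inv n).1.2
    have h1closed : ∀ n, ∀ x ∈ (s1 n).1, Bl x ⊆ (s1 n).1 := fun n => (hs1inv n).2.1
    have h1q : ∀ n, q ∉ (s1 n).1 := fun n => (hs1inv n).2.2.1
    have h1bd : ∀ n, bd (CayG S) (s1 n).1 = {q, (s1 n).2} := fun n => (hs1inv n).2.2.2.1
    have h1fq : ∀ n, (s1 n).2 ≠ q := fun n => (hs1inv n).2.2.2.2.1
    have h1α : ∀ n, ∀ z ∈ (s1 n).1, Bl z = Bl 1 ∨ q ∉ bd (CayG S) (Bl z) :=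
      fun n => (hs1inv n).2.2.2.2.2
    have h2P : ∀ n, Bl 1 ⊆ (s2 n).1 := fun n => (hs2inv n).1.2
    have h2closed : ∀ n, ∀ x ∈ (s2 n).1, Bl x ⊆ (s2 n).1 := fun n => (hs2inv n).2.1
    have h2p : ∀ n, p ∉ (s2 n).1 := fun n => (hs2inv n).2.2.1
    have h2bd : ∀ n, bd (CayG S) (s2 n).1 = {p, (s2 n).2} := fun n => (hs2inv n).2.2.2.1
    have h2fq : ∀ n, (s2 n).2 ≠ p := fun n => (hs2inv n).2.2.2.2.1
    have h2α : ∀ n, ∀ z ∈ (s2 n).1, Bl z = Bl 1 ∨ p ∉ bd (CayG S) (Bl z) :=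
      fun n => (hs2inv n).2.2.2.2.2
    -- monotonicity and frontier membership
    have h1mono : ∀ m n, m ≤ n → (s1 m).1 ⊆ (s1 n).1 := by
      intro m n h
      obtain ⟨k, rfl⟩ := Nat.exists_eq_add_of_le h
      clear h
      induction k with
      | zero => exact subset_refl _
      | succ k ih =>
        rw [show m + (k+1) = (m+k) + 1 from rfl, hs1step (m+k)]
        exact ih.trans Set.subset_union_left
    have h1fmem : ∀ n, (s1 n).2 ∈ (s1 (n+1)).1 := by
      intro n
      rw [hs1step n]
      exact Or.inr (hBl_mem _)
    have h1fnot : ∀ n, (s1 n).2 ∉ (s1 n).1 := by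
      intro n
      have : (s1 n).2 ∈ bd (CayG S) (s1 n).1 := by rw [h1bd n]; right; rfl
      exact this.1
    -- the limit sets
    have hpW1 : p ∈ (⋃ n, (s1 n).1) := by
      refine Set.mem_iUnion.mpr ⟨1, ?_⟩
      have := h1fmem 0
      rwa [hs10] at this
    have hqW2 : q ∈ (⋃ n, (s2 n).1) := by
      refine Set.mem_iUnion.mpr ⟨1, ?_⟩
      rw [hs2step 0]
      have : (s2 0).2 ∈ Bl (s2 0).2 := hBl_mem _
      rw [hs20] at this ⊢
      exact Or.inr this
    have hqW1 : q ∉ (⋃ n, (s1 n).1) := by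
      intro h
      obtain ⟨n, hn⟩ := Set.mem_iUnion.mp h
      exact h1q n hn
    have hpW2 : p ∉ (⋃ n, (s2 n).1) := by
      intro h
      obtain ⟨n, hn⟩ := Set.mem_iUnion.mp h
      exact h2p n hn
    have hW1closed : ∀ z ∈ (⋃ n, (s1 n).1), Bl z ⊆ (⋃ n, (s1 n).1) := by
      intro z hz
      obtain ⟨n, hn⟩ := Set.mem_iUnion.mp hz
      exact (h1closed n z hn).trans (Set.subset_iUnion (fun n => (s1 n).1) n)
    have hW2closed : ∀ z ∈ (⋃ n, (s2 n).1), Bl z ⊆ (⋃ n, (s2 n).1) := by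
      intro z hz
      obtain ⟨n, hn⟩ := Set.mem_iUnion.mp hz
      exact (h2closed n z hn).trans (Set.subset_iUnion (fun n => (s2 n).1) n)
    have hbdW1 : bd (CayG S) (⋃ n, (s1 n).1) ⊆ {q} := by
      rintro v ⟨hv, u, hu, hadj⟩
      obtain ⟨n, hn⟩ := Set.mem_iUnion.mp hu
      have hvn : v ∉ (s1 n).1 := fun h => hv (Set.mem_iUnion.mpr ⟨n, h⟩)
      have : v ∈ bd (CayG S) (s1 n).1 := ⟨hvn, u, hn, hadj⟩
      rw [h1bd n] at this
      rcases this with h | h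
      · exact h
      · exfalso
        have : v ∈ (s1 (n+1)).1 := by
          rw [show v = (s1 n).2 from h]
          exact h1fmem n
        exact hv (Set.mem_iUnion.mpr ⟨n+1, this⟩)
    have hW1inf : (⋃ n, (s1 n).1).Infinite := by
      refine Set.infinite_of_injective_forall_mem (f := fun n => (s1 n).2) ?_ ?_
      · intro m n hmn
        by_contra hne
        have key : ∀ m' n', m' < n' → (s1 m').2 ≠ (s1 n').2 := by
          intro m' n' hlt heq
          have h1 : (s1 m').2 ∈ (s1 n').1 := h1mono (m'+1) n' hlt (h1fmem m')
          rw [heq] at h1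
          exact h1fnot n' h1
        rcases lt_or_gt_of_ne hne with h | h
        · exact key m n h hmn
        · exact key n m h hmn.symm
      · intro n
        exact Set.mem_iUnion.mpr ⟨n+1, h1fmem n⟩
    -- the two limits meet only in the base block
    have hmeet : ∀ z, z ∈ (⋃ n, (s1 n).1) → z ∈ (⋃ n, (s2 n).1) → z ∈ Bl 1 := by
      intro z hz1 hz2
      by_contra hzP
      have hmne : {m | ∃ w, w ∈ (s2 m).1 ∧ w ∈ (⋃ n, (s1 n).1) ∧ w ∉ Bl 1}.Nonempty := by
        obtain ⟨M, hM⟩ := Set.mem_iUnion.mp hz2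
        exact ⟨M, z, hM, hz1, hzP⟩
      obtain ⟨w, hw2, hw1, hwP⟩ := Nat.sInf_mem hmne
      have hm₀pos : sInf {m | ∃ w, w ∈ (s2 m).1 ∧ w ∈ (⋃ n, (s1 n).1) ∧ w ∉ Bl 1} ≠ 0 := by
        intro h0
        rw [h0] at hw2
        rw [hs20] at hw2
        exact hwP hw2
      obtain ⟨k, hk⟩ := Nat.exists_eq_succ_of_ne_zero hm₀pos
      have hknot : k ∉ {m | ∃ w, w ∈ (s2 m).1 ∧ w ∈ (⋃ n, (s1 n).1) ∧ w ∉ Bl 1} := by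
        intro h
        have := Nat.sInf_le h
        omega
      rw [hk, hs2step k] at hw2
      have hwBf : w ∈ Bl (s2 k).2 := by
        rcases hw2 with h | h
        · exact absurd ⟨w, h, hw1, hwP⟩ hknot
        · exact h
      have hBlw : Bl w = Bl (s2 k).2 := hBl_eq_of_mem hwBf
      have hBlf2W1 : Bl (s2 k).2 ⊆ (⋃ n, (s1 n).1) := by
        rw [← hBlw]
        exact hW1closed w hw1
      have hf2W1 : (s2 k).2 ∈ (⋃ n, (s1 n).1) := hBlf2W1 (hBl_mem _)
      have hf2bd : (s2 k).2 ∈ bd (CayG S) (s2 k).1 := by rw [h2bd k]; right; rfl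
      obtain ⟨hf2nk, u, huk, hadj⟩ := hf2bd
      by_cases huW1 : u ∈ (⋃ n, (s1 n).1)
      · have huP : u ∈ Bl 1 := by
          by_contra h
          exact hknot ⟨u, huk, huW1, h⟩
        have hf2P : (s2 k).2 ∉ Bl 1 := fun h => hf2nk (h2P k h)
        have hmem : (s2 k).2 ∈ bd (CayG S) (Bl 1) := ⟨hf2P, u, huP, hadj⟩
        rw [hbdP] at hmem
        rcases hmem with h | h
        · exact h2fq k h
        · exact hqW1 (by rw [← show (s2 k).2 = q from h]; exact hf2W1)
      · have hubd : u ∈ bd (CayG S) (⋃ n, (s1 n).1) := ⟨huW1, (s2 k).2, hf2W1, hadj.symm⟩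
        have huq : u = q := hbdW1 hubd
        have hqbd : q ∈ bd (CayG S) (Bl (s2 k).2) := by
          refine ⟨fun h => hqW1 (hBlf2W1 h), (s2 k).2, hBl_mem _, ?_⟩
          rw [← huq]
          exact hadj.symm
        obtain ⟨n1, hn1⟩ := Set.mem_iUnion.mp hf2W1
        rcases h1α n1 _ hn1 with hPeq | hq'
        · refine hwP ?_
          rw [← hPeq, ← hBlw]
          exact hBl_mem w
        · exact hq' hqbd
    -- conclude with the two-ends contradiction
    have hKfin : (Bl 1 ∪ {p, q} : Set Γ).Finite := (hBl_fin 1).union (Set.toFinite _)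
    have hbdW1K : bd (CayG S) (⋃ n, (s1 n).1) ⊆ Bl 1 ∪ {p, q} := by
      refine hbdW1.trans ?_
      intro v hv
      rw [show v = q from hv]
      exact Or.inr (Or.inr rfl)
    have hbdW2 : bd (CayG S) (⋃ n, (s2 n).1) ⊆ {p} := by
      rintro v ⟨hv, u, hu, hadj⟩
      obtain ⟨n, hn⟩ := Set.mem_iUnion.mp hu
      have hvn : v ∉ (s2 n).1 := fun h => hv (Set.mem_iUnion.mpr ⟨n, h⟩)
      have hmem : v ∈ bd (CayG S) (s2 n).1 := ⟨hvn, u, hn, hadj⟩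
      rw [h2bd n] at hmem
      rcases hmem with h | h
      · exact h
      · exfalso
        have hv' : v ∈ (s2 (n+1)).1 := by
          rw [show v = (s2 n).2 from h, hs2step n]
          exact Or.inr (hBl_mem _)
        exact hv (Set.mem_iUnion.mpr ⟨n+1, hv'⟩)
    have hbdW2K : bd (CayG S) (⋃ n, (s2 n).1) ⊆ Bl 1 ∪ {p, q} := by
      refine hbdW2.trans ?_
      intro v hv
      rw [show v = p from hv]
      exact Or.inr (Or.inl rfl)
    have hW2inf : (⋃ n, (s2 n).1).Infinite := by
      have h2fmem : ∀ n, (s2 n).2 ∈ (s2 (n+1)).1 := by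
        intro n
        rw [hs2step n]
        exact Or.inr (hBl_mem _)
      have h2fnot : ∀ n, (s2 n).2 ∉ (s2 n).1 := by
        intro n
        have : (s2 n).2 ∈ bd (CayG S) (s2 n).1 := by rw [h2bd n]; right; rfl
        exact this.1
      have h2mono : ∀ m n, m ≤ n → (s2 m).1 ⊆ (s2 n).1 := by
        intro m n h
        obtain ⟨k, rfl⟩ := Nat.exists_eq_add_of_le h
        clear h
        induction k with
        | zero => exact subset_refl _
        | succ k ih =>
          rw [show m + (k+1) = (m+k) + 1 from rfl, hs2step (m+k)]
          exact ih.trans Set.subset_union_left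
      refine Set.infinite_of_injective_forall_mem (f := fun n => (s2 n).2) ?_ ?_
      · intro m n hmn
        by_contra hne
        have key : ∀ m' n', m' < n' → (s2 m').2 ≠ (s2 n').2 := by
          intro m' n' hlt heq
          have h1 : (s2 m').2 ∈ (s2 n').1 := h2mono (m'+1) n' hlt (h2fmem m')
          rw [heq] at h1
          exact h2fnot n' h1
        rcases lt_or_gt_of_ne hne with h | h
        · exact key m n h hmn
        · exact key n m h hmn.symm
      · intro n
        exact Set.mem_iUnion.mpr ⟨n+1, h2fmem n⟩
    refine no_two_sides (G := CayG S) hend2 hKfin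
      (A₁ := (⋃ n, (s1 n).1) \ (Bl 1 ∪ {p, q})) (A₂ := (⋃ n, (s2 n).1) \ (Bl 1 ∪ {p, q}))
      (hW1inf.diff hKfin) (hW2inf.diff hKfin) ?_ ?_ ?_ ?_ ?_
    · intro z hz1 hz2
      exact hz1.2 (Or.inl (hmeet z hz1.1 hz2.1))
    · exact fun z hz => hz.2
    · exact fun z hz => hz.2
    · intro z hz y hra
      exact ⟨hra.stay hbdW1K hz.1, hra.end_not_mem⟩
    · intro z hz y hra
      exact ⟨hra.stay hbdW2K hz.1, hra.end_not_mem⟩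

end Stmt14

/-- A finitely generated Cayley graph of an infinite group which is 1-ended is
3-connected: removing any set of at most 2 vertices leaves it connected. -/
theorem stmt_14 {Γ : Type*} [Group Γ] [Infinite Γ] (S : Finset Γ)
    (hgen : Subgroup.closure (S : Set Γ) = ⊤)
    (hend1 : Nonempty (SimpleGraph.fromRel (fun g h : Γ => ∃ s ∈ S, h = g * s)).end)
    (hend2 : Subsingleton (SimpleGraph.fromRel (fun g h : Γ => ∃ s ∈ S, h = g * s)).end) :
    ∀ A : Set Γ, A.Finite → A.ncard ≤ 2 →
      (SimpleGraph.induce Aᶜ (SimpleGraph.fromRel (fun g h : Γ => ∃ s ∈ S, h = g * s))).Connected := by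
  intro A hAfin hA2
  classical
  have hend2' : Subsingleton ↥(Stmt14.CayG S).end := hend2
  have hconn := Stmt14.cay_connected hgen
  have hpc : (Stmt14.CayG S).Preconnected := hconn.preconnected
  haveI : Fact (Stmt14.CayG S).Preconnected := ⟨hpc⟩
  haveI : (Stmt14.CayG S).LocallyFinite := fun v => (Stmt14.cay_nbr_finite v).fintype
  show (SimpleGraph.induce Aᶜ (Stmt14.CayG S)).Connected
  rw [SimpleGraph.connected_iff]
  refine ⟨?_, hAfin.infinite_compl.nonempty.to_subtype⟩
  by_contra hnp
  simp only [SimpleGraph.Preconnected] at hnp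
  push_neg at hnp
  obtain ⟨u, v, huv⟩ := hnp
  have huA : u.1 ∉ A := u.2
  have hvA : v.1 ∉ A := v.2
  set X : Set Γ := {y | Stmt14.RA (Stmt14.CayG S) A u.1 y} with hXdef
  set Y : Set Γ := {y | Stmt14.RA (Stmt14.CayG S) A v.1 y} with hYdef
  have hXY : ∀ z, z ∈ X → z ∈ Y → False := by
    intro z hz1 hz2
    have hra : Stmt14.RA (Stmt14.CayG S) A u.1 v.1 := hz1.trans hz2.symm
    exact huv (hra.to_induce_reachable huA hvA)
  have hbdX : Stmt14.bd (Stmt14.CayG S) X ⊆ A := by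
    rintro w ⟨hwX, t, htX, hadj⟩
    by_contra hwA
    exact hwX ((htX : Stmt14.RA (Stmt14.CayG S) A u.1 t).adj_extend hadj hwA)
  have hbdY : Stmt14.bd (Stmt14.CayG S) Y ⊆ A := by
    rintro w ⟨hwY, t, htY, hadj⟩
    by_contra hwA
    exact hwY ((htY : Stmt14.RA (Stmt14.CayG S) A v.1 t).adj_extend hadj hwA)
  by_cases hXf : X.Finite
  · refine Stmt14.no_small_separator hgen hend2' X hXf ⟨u.1, Stmt14.RA.refl huA⟩ ?_
    exact le_trans (Set.ncard_le_ncard hbdX hAfin) hA2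
  · by_cases hYf : Y.Finite
    · refine Stmt14.no_small_separator hgen hend2' Y hYf ⟨v.1, Stmt14.RA.refl hvA⟩ ?_
      exact le_trans (Set.ncard_le_ncard hbdY hAfin) hA2
    · refine Stmt14.no_two_sides (G := Stmt14.CayG S) hend2' hAfin
        (A₁ := X) (A₂ := Y) hXf hYf hXY ?_ ?_ ?_ ?_
      · exact fun z hz => hz.end_not_mem
      · exact fun z hz => hz.end_not_mem
      · exact fun z hz y hra => (hz : Stmt14.RA _ A u.1 z).trans hra
      · exact fun z hz y hra => (hz : Stmt14.RA _ A v.1 z).trans hra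

-- axiom check
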